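/- Let H be a Hilbert space and t a positive self-adjoint trace-class operator on H, written as t = Σᵢ φᵢ ⊗ φᵢ with {φᵢ} orthogonal. Then the trace (nuclear) norm of t equals Σᵢ ‖φᵢ‖², i.e. ‖t‖_N = Tr t = Σᵢ ‖φᵢ‖², and this coincides with the projective tensor norm of t in H ⊗̂_π H. -/

import Mathlib

open Filter Topology
open scoped RealInnerProductSpace

noncomputable section

variable {H H₁ H₂ : Type*}

/-- Trace of an operator along a Hilbert basis. -/
def traceAlong [NormedAddCommGroup H] [InnerProductSpace ℝ H] {ι : Type*}
    (b : HilbertBasis ι ℝ H) (s : H →L[ℝ] H) : ℝ :=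
  ∑' i, ⟪s (b i), b i⟫

/-- `t` is nuclear (trace-class) with nuclear (projective) norm at most `C`:
it admits a representation `t = Σ xᵢ ⊗ yᵢ` with `Σ ‖xᵢ‖‖yᵢ‖ ≤ C`. -/
def IsNuclearWith [NormedAddCommGroup H₁] [InnerProductSpace ℝ H₁]
    [NormedAddCommGroup H₂] [InnerProductSpace ℝ H₂]
    (C : ℝ) (t : H₁ →L[ℝ] H₂) : Prop :=
  ∃ (x : ℕ → H₂) (y : ℕ → H₁),
    Summable (fun i => ‖x i‖ * ‖y i‖) ∧ (∑' i, ‖x i‖ * ‖y i‖) ≤ C ∧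
      ∀ z : H₁, HasSum (fun i => ⟪y i, z⟫ • x i) (t z)

/-- `t` is a nuclear (trace-class) operator. -/
def IsNuclear [NormedAddCommGroup H₁] [InnerProductSpace ℝ H₁]
    [NormedAddCommGroup H₂] [InnerProductSpace ℝ H₂] (t : H₁ →L[ℝ] H₂) : Prop :=
  ∃ C, IsNuclearWith C t

/-- The nuclear (trace/projective) norm of `t`. -/
def nuclearNorm [NormedAddCommGroup H₁] [InnerProductSpace ℝ H₁]
    [NormedAddCommGroup H₂] [InnerProductSpace ℝ H₂] (t : H₁ →L[ℝ] H₂) : ℝ :=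
  sInf {C | IsNuclearWith C t}

/-- Weak-* convergence in `N[H] = K[H]*`: testing against every compact operator `q`
via the trace pairing `(q,t) ↦ Tr(q t)`. -/
def WeakStarTendstoN [NormedAddCommGroup H] [InnerProductSpace ℝ H] {ι : Type*}
    (b : HilbertBasis ι ℝ H) (ts : ℕ → H →L[ℝ] H) (t : H →L[ℝ] H) : Prop :=
  ∀ q : H →L[ℝ] H, IsCompactOperator q →
    Tendsto (fun n => traceAlong b (q ∘L ts n)) atTop (𝓝 (traceAlong b (q ∘L t)))

section Aux

open Function

variable {H' : Type*} [NormedAddCommGroup H'] [InnerProductSpace ℝ H'] [CompleteSpace H']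
  {ι' : Type*}

open scoped RealInnerProductSpace

private lemma aux_parseval (b : HilbertBasis ι' ℝ H') (u : H') :
    HasSum (fun i => ⟪u, b i⟫ ^ 2) (‖u‖ ^ 2) := by
  have h := b.hasSum_inner_mul_inner u u
  have he : (fun i => ⟪u, b i⟫ * ⟪b i, u⟫) = fun i => ⟪u, b i⟫ ^ 2 :=
    funext fun i => by rw [real_inner_comm (b i) u]; ring
  rwa [he, real_inner_self_eq_norm_sq] at h

private lemma aux_CS (b : HilbertBasis ι' ℝ H') (u v : H') (s : Finset ι') :
    ∑ i ∈ s, |⟪u, b i⟫ * ⟪v, b i⟫| ≤ ‖u‖ * ‖v‖ := by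
  have h1 : ∑ i ∈ s, ⟪u, b i⟫ ^ 2 ≤ ‖u‖ ^ 2 :=
    sum_le_hasSum s (fun i _ => sq_nonneg _) (aux_parseval b u)
  have h2 : ∑ i ∈ s, ⟪v, b i⟫ ^ 2 ≤ ‖v‖ ^ 2 :=
    sum_le_hasSum s (fun i _ => sq_nonneg _) (aux_parseval b v)
  have h3 := Finset.sum_mul_sq_le_sq_mul_sq s (fun i => |⟪u, b i⟫|) (fun i => |⟪v, b i⟫|)
  simp only [sq_abs, ← abs_mul] at h3
  have h4 : (0:ℝ) ≤ ∑ i ∈ s, |⟪u, b i⟫ * ⟪v, b i⟫| :=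
    Finset.sum_nonneg fun i _ => abs_nonneg _
  have h5 : (0:ℝ) ≤ ∑ i ∈ s, ⟪u, b i⟫ ^ 2 := Finset.sum_nonneg fun i _ => sq_nonneg _
  have h6 : (0:ℝ) ≤ ∑ i ∈ s, ⟪v, b i⟫ ^ 2 := Finset.sum_nonneg fun i _ => sq_nonneg _
  have hsq : (∑ i ∈ s, |⟪u, b i⟫ * ⟪v, b i⟫|) ^ 2 ≤ (‖u‖ * ‖v‖) ^ 2 := by
    nlinarith [sq_nonneg (‖u‖ : ℝ), sq_nonneg (‖v‖ : ℝ)]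
  exact (pow_le_pow_iff_left₀ h4 (mul_nonneg (norm_nonneg u) (norm_nonneg v)) two_ne_zero).1 hsq

private lemma aux_abs_summable (b : HilbertBasis ι' ℝ H') (u v : H') :
    Summable (fun i => |⟪u, b i⟫ * ⟪v, b i⟫|) :=
  summable_of_sum_le (fun _ => abs_nonneg _) (aux_CS b u v)

private lemma aux_abs_tsum_le (b : HilbertBasis ι' ℝ H') (u v : H') :
    ∑' i, |⟪u, b i⟫ * ⟪v, b i⟫| ≤ ‖u‖ * ‖v‖ :=
  Summable.tsum_le_of_sum_le (aux_abs_summable b u v) (aux_CS b u v)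

/-- Trace of an operator given by a nuclear representation. -/
private lemma aux_trace (b : HilbertBasis ι' ℝ H') (t : H' →L[ℝ] H') (x y : ℕ → H')
    (hs : Summable fun j => ‖x j‖ * ‖y j‖)
    (hr : ∀ z : H', HasSum (fun j => ⟪y j, z⟫ • x j) (t z)) :
    traceAlong b t = ∑' j, ⟪y j, x j⟫ := by
  set G : ℕ → ι' → ℝ := fun j i => ⟪y j, b i⟫ * ⟪x j, b i⟫ with hGdef
  have hGabs : Summable (fun p : ℕ × ι' => |G p.1 p.2|) := by
    rw [summable_prod_of_nonneg (fun p => abs_nonneg _)]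
    refine ⟨fun j => aux_abs_summable b (y j) (x j), ?_⟩
    refine Summable.of_nonneg_of_le (fun j => tsum_nonneg fun i => abs_nonneg _)
      (fun j => ?_) (show Summable fun j => ‖y j‖ * ‖x j‖ by simpa [mul_comm] using hs)
    exact aux_abs_tsum_le b (y j) (x j)
  have hG : Summable (Function.uncurry G) := Summable.of_abs hGabs
  have hGi : ∀ i, HasSum (fun j => G j i) ⟪t (b i), b i⟫ := by
    intro i
    have h := (hr (b i)).mapL (innerSL ℝ (b i))
    have he : (fun j => (innerSL ℝ (b i)) (⟪y j, b i⟫ • x j)) = fun j => G j i :=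
      funext fun j => by
        simp only [innerSL_apply_apply, inner_smul_right, hGdef]
        rw [real_inner_comm (b i) (x j)]
    rw [he] at h
    rwa [show (innerSL ℝ (b i)) (t (b i)) = ⟪t (b i), b i⟫ from real_inner_comm _ _] at h
  have hGj : ∀ j, HasSum (G j) ⟪y j, x j⟫ := by
    intro j
    have h := b.hasSum_inner_mul_inner (y j) (x j)
    have he : (fun i => ⟪y j, b i⟫ * ⟪b i, x j⟫) = G j :=
      funext fun i => by simp only [hGdef, real_inner_comm (x j)]
    rwa [he] at h
  calc traceAlong b t = ∑' i, ⟪t (b i), b i⟫ := rfl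
    _ = ∑' (i) (j), G j i := tsum_congr fun i => (hGi i).tsum_eq.symm
    _ = ∑' (j) (i), G j i := Summable.tsum_comm hG
    _ = ∑' j, ⟪y j, x j⟫ := tsum_congr fun j => (hGj j).tsum_eq

end Aux

end

/- STATEMENT 18: for a positive self-adjoint trace-class operator
`t = Σᵢ φᵢ ⊗ φᵢ` with `{φᵢ}` orthogonal, the trace (= nuclear = projective tensor)
norm equals `Σᵢ ‖φᵢ‖²`. -/
theorem trace_norm_of_positive_tensor
    [NormedAddCommGroup H] [InnerProductSpace ℝ H] [CompleteSpace H]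
    {ι : Type*} (b : HilbertBasis ι ℝ H)
    (t : H →L[ℝ] H) (φ : ℕ → H)
    (horth : Pairwise fun i j => ⟪φ i, φ j⟫ = (0:ℝ))
    (hsum : Summable fun i => ‖φ i‖ ^ 2)
    (hrep : ∀ z : H, HasSum (fun i => ⟪φ i, z⟫ • φ i) (t z)) :
    nuclearNorm t = ∑' i, ‖φ i‖ ^ 2 ∧ traceAlong b t = ∑' i, ‖φ i‖ ^ 2 := by
  have hφn : Summable fun j => ‖φ j‖ * ‖φ j‖ := by simpa [pow_two] using hsum
  have htr : traceAlong b t = ∑' j, ⟪φ j, φ j⟫ := aux_trace b t φ φ hφn hrep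
  have htr2 : traceAlong b t = ∑' i, ‖φ i‖ ^ 2 := by
    rw [htr]; exact tsum_congr fun j => real_inner_self_eq_norm_sq _
  refine ⟨?_, htr2⟩
  have hmem : IsNuclearWith (∑' i, ‖φ i‖ ^ 2) t :=
    ⟨φ, φ, hφn, le_of_eq (tsum_congr fun i => (pow_two ‖φ i‖).symm), hrep⟩
  have hlb : ∀ C ∈ {C | IsNuclearWith C t}, (∑' i, ‖φ i‖ ^ 2) ≤ C := by
    rintro C ⟨x, y, hs, hC, hr⟩
    have h1 : traceAlong b t = ∑' j, ⟪y j, x j⟫ := aux_trace b t x y hs hr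
    have hsum_inner : Summable fun j => ⟪y j, x j⟫ := by
      refine Summable.of_norm_bounded hs fun j => ?_
      rw [Real.norm_eq_abs, mul_comm]
      exact (abs_real_inner_le_norm _ _)
    have h2 : ∑' j, ⟪y j, x j⟫ ≤ ∑' j, ‖x j‖ * ‖y j‖ := by
      refine Summable.tsum_le_tsum (fun j => ?_) hsum_inner hs
      rw [mul_comm]; exact real_inner_le_norm _ _
    linarith [htr2.symm.trans h1]
  exact le_antisymm (csInf_le ⟨_, hlb⟩ hmem) (le_csInf ⟨_, hmem⟩ hlb)
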